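/- For k even, the complete k-uniform hypergraph K_n^k on n ≥ k+1 vertices is non-odd-bipartite. -/
import Mathlib


open Finset BigOperators

variable {V : Type*}

/-- A `k`-uniform hypergraph given by its edge set: every edge has exactly `k` vertices. -/
def Uniform [DecidableEq V] (E : Finset (Finset V)) (k : ℕ) : Prop :=
  ∀ e ∈ E, e.card = k

/-- Two vertices are adjacent if some edge contains both. -/
def HAdj [DecidableEq V] (E : Finset (Finset V)) (a b : V) : Prop :=
  a ≠ b ∧ ∃ e ∈ E, a ∈ e ∧ b ∈ e

/-- The hypergraph is connected: every two vertices are joined by a walk. -/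
def HConnected [DecidableEq V] (E : Finset (Finset V)) : Prop :=
  ∀ a b : V, Relation.ReflTransGen (HAdj E) a b

/-- For `k` even, the complete `k`-uniform hypergraph on `n ≥ k+1` vertices is
non-odd-bipartite. -/
theorem stmt14 [Fintype V] [DecidableEq V] (k : ℕ) (hk : Even k) (hk0 : 0 < k)
    (hn : k + 1 ≤ Fintype.card V) :
    ¬ ∃ S : Finset V, ∀ e ∈ Finset.powersetCard k (Finset.univ : Finset V),
        Odd ((e ∩ S).card) := by
  rintro ⟨S, hS⟩
  have hmem : ∀ e : Finset V, e.card = k → Odd ((e ∩ S).card) := by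
    intro e he
    exact hS e (by simp [Finset.mem_powersetCard, he])
  by_cases hsk : k ≤ S.card
  · obtain ⟨e, heS, hec⟩ := Finset.exists_subset_card_eq hsk
    have := hmem e hec
    rw [Finset.inter_eq_left.mpr heS, hec] at this
    exact (Nat.not_odd_iff_even.mpr hk) this
  · push_neg at hsk
    -- choose t ⊆ Sᶜ with card k - S.card
    have hSle : S.card ≤ Fintype.card V := Finset.card_le_univ S
    have hcompl : k - S.card ≤ Sᶜ.card := by
      rw [Finset.card_compl]
      omega
    obtain ⟨t, htc, htcard⟩ := Finset.exists_subset_card_eq hcompl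
    have hdisj : Disjoint S t := by
      refine Finset.disjoint_left.mpr fun x hxS hxt => ?_
      exact (Finset.mem_compl.mp (htc hxt)) hxS
    have hodd : Odd S.card := by
      have := hmem (S ∪ t) (by
        rw [Finset.card_union_of_disjoint hdisj, htcard]; omega)
      rwa [Finset.union_inter_cancel_left] at this
    have hpos : 0 < S.card := hodd.pos
    obtain ⟨v, hvS⟩ := Finset.card_pos.mp hpos
    -- pick w ∈ Sᶜ \ t
    have : 0 < (Sᶜ \ t).card := by
      have h1 := Finset.card_sdiff_add_card_eq_card htc
      have h2 : Sᶜ.card = Fintype.card V - S.card := Finset.card_compl S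
      omega
    obtain ⟨w, hw⟩ := Finset.card_pos.mp this
    have hwC := Finset.mem_sdiff.mp hw
    set e := insert w ((S.erase v) ∪ t) with he
    have hwn : w ∉ (S.erase v) ∪ t := by
      intro h
      rcases Finset.mem_union.mp h with h | h
      · exact (Finset.mem_compl.mp hwC.1) (Finset.mem_of_mem_erase h)
      · exact hwC.2 h
    have hdisj2 : Disjoint (S.erase v) t :=
      hdisj.mono_left (Finset.erase_subset _ _)
    have hecard : e.card = k := by
      rw [he, Finset.card_insert_of_notMem hwn,
        Finset.card_union_of_disjoint hdisj2, Finset.card_erase_of_mem hvS, htcard]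
      omega
    have := hmem e hecard
    have heS : e ∩ S = S.erase v := by
      ext x
      simp only [he, Finset.mem_inter, Finset.mem_insert, Finset.mem_union,
        Finset.mem_erase]
      constructor
      · rintro ⟨h1 | h1 | h1, h2⟩
        · exact absurd h2 (by subst h1; exact Finset.mem_compl.mp hwC.1)
        · exact h1
        · exact absurd h2 (Finset.mem_compl.mp (htc h1))
      · rintro ⟨h1, h2⟩
        exact ⟨Or.inr (Or.inl ⟨h1, h2⟩), h2⟩
    rw [heS, Finset.card_erase_of_mem hvS] at this
    have : Even S.card := by
      rcases hodd with ⟨m, hm⟩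
      rcases this with ⟨m', hm'⟩
      omega
    exact (Nat.not_even_iff_odd.mpr hodd) this
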